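/- Let X be an infinite, locally finite, connected graph containing a bi-infinite geodesic (x_n)_{n∈ℤ} with d(x_m,x_n) = |m − n|, let 0 < α ≤ 1, and let x₀ = x_0. Then for every integer n ≥ 1, |B_X(x₀,n)| ≤ |B_{X_α}(x₀,n)| ≤ 2·|B_X(x₀,n)|, where B_X(x₀,n) is the ball of radius n about x₀ in X and B_{X_α}(x₀,n) is the ball of radius n about x₀ in X_α. In particular, X and X_α have the same growth rate. -/

import Mathlib

/-- `f` is an `(L,A)`-quasi-isometric embedding with respect to the
distance functions `dX` and `dY`. -/
def IsQIE {X Y : Type*} (dX : X → X → ℝ) (dY : Y → Y → ℝ) (L A : ℝ) (f : X → Y) : Prop :=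
  ∀ a b : X, (1 / L) * dX a b - A ≤ dY (f a) (f b) ∧ dY (f a) (f b) ≤ L * dX a b + A

/-- `f` is coarsely surjective with respect to the distance function `dY`. -/
def IsCoarselySurj {X Y : Type*} (dY : Y → Y → ℝ) (f : X → Y) : Prop :=
  ∃ C : ℝ, 0 ≤ C ∧ ∀ y : Y, ∃ x : X, dY y (f x) ≤ C

/-- The shortest-path distance of a graph, as a real-valued distance function. -/
noncomputable def gdist {V : Type*} (G : SimpleGraph V) : V → V → ℝ :=
  fun u v => (G.dist u v : ℝ)

/-- The closed ball of radius `r` about `x` in the shortest-path metric. -/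
def gball {V : Type*} (G : SimpleGraph V) (x : V) (r : ℕ) : Set V :=
  {v | G.dist x v ≤ r}

/-- `g_α(n) = ⌈(log n)^α⌉`, the length of the segment attached at `x_{n²}`. -/
noncomputable def glen (α : ℝ) (n : ℕ) : ℤ := ⌈Real.log (n : ℝ) ^ α⌉

/-- The vertex set of `X_α`: vertices of `X` together with the new segment vertices
`k_n` for `n ≥ 1` and `1 ≤ k ≤ g_α(n)`. -/
def XaV (α : ℝ) (V : Type*) : Type _ :=
  V ⊕ {p : ℕ × ℕ // 1 ≤ p.1 ∧ 1 ≤ p.2 ∧ (p.2 : ℤ) ≤ glen α p.1}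

/-- The adjacency relation of `X_α`: the adjacencies of `X`, the vertex `1_n` is
attached to `0_n = x_{n²}`, and `k_n` is adjacent to `(k+1)_n`. -/
def xaRel (α : ℝ) {V : Type*} (G : SimpleGraph V) (x : ℤ → V) :
    XaV α V → XaV α V → Prop
  | Sum.inl u, Sum.inl v => G.Adj u v
  | Sum.inl u, Sum.inr p => p.1.2 = 1 ∧ u = x ((p.1.1 : ℤ) ^ 2)
  | Sum.inr p, Sum.inl u => p.1.2 = 1 ∧ u = x ((p.1.1 : ℤ) ^ 2)
  | Sum.inr p, Sum.inr q => p.1.1 = q.1.1 ∧ (p.1.2 + 1 = q.1.2 ∨ q.1.2 + 1 = p.1.2)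

/-- The graph `X_α`, obtained from `X` by attaching, for each `n ≥ 1`, a segment of
length `g_α(n)` at the vertex `x_{n²}` of the chosen bi-infinite geodesic. -/
def Xa (α : ℝ) {V : Type*} (G : SimpleGraph V) (x : ℤ → V) : SimpleGraph (XaV α V) :=
  SimpleGraph.fromRel (xaRel α G x)

lemma aux_ball_finite {W : Type*} (G : SimpleGraph W) (hlf : ∀ v, (G.neighborSet v).Finite)
    (hc : G.Connected) (x0 : W) : ∀ n : ℕ, (gball G x0 n).Finite := by
  intro n
  induction n with
  | zero =>
    apply Set.Finite.subset (Set.finite_singleton x0)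
    intro v hv
    simp only [gball, Set.mem_setOf_eq, Nat.le_zero] at hv
    simp [((hc.dist_eq_zero_iff).mp hv).symm]
  | succ n ih =>
    apply Set.Finite.subset (ih.union (Set.Finite.biUnion ih (fun w _ => hlf w)))
    intro v hv
    simp only [gball, Set.mem_setOf_eq] at hv
    by_cases h : G.dist x0 v ≤ n
    · exact Or.inl h
    · have hd : G.dist x0 v = n + 1 := le_antisymm hv (by omega)
      have hne : v ≠ x0 := by
        intro he; rw [he, SimpleGraph.dist_self] at hd; omega
      obtain ⟨p, hp⟩ := (hc.preconnected x0 v).exists_walk_length_eq_dist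
      obtain ⟨w, hadj, q, hq⟩ := SimpleGraph.Walk.exists_eq_cons_of_ne hne p.reverse
      have hlen : q.length = n := by
        have := congrArg SimpleGraph.Walk.length hq
        rw [SimpleGraph.Walk.length_reverse, hp, hd] at this
        simpa using this.symm
      right
      refine Set.mem_biUnion (x := w) ?_ hadj.symm
      have := SimpleGraph.dist_le q.reverse
      rw [SimpleGraph.Walk.length_reverse, hlen] at this
      exact this

section Aux

variable {V : Type*} {G : SimpleGraph V} {x : ℤ → V} {α : ℝ}

lemma aux_glen_le (hα : 0 < α) (hα1 : α ≤ 1) (m : ℕ) (hm : 1 ≤ m) : glen α m ≤ (m : ℤ) := by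
  rw [glen, Int.ceil_le]
  have hm1 : (1:ℝ) ≤ (m:ℝ) := by exact_mod_cast hm
  have h0 : (0:ℝ) ≤ Real.log m := Real.log_nonneg hm1
  push_cast
  rcases le_or_gt (Real.log m) 1 with h|h
  · exact (Real.rpow_le_one h0 h hα.le).trans hm1
  · calc (Real.log m) ^ α ≤ (Real.log m) ^ (1:ℝ) :=
        Real.rpow_le_rpow_of_exponent_le h.le hα1
    _ = Real.log m := Real.rpow_one _
    _ ≤ (m:ℝ) - 1 := Real.log_le_sub_one_of_pos (by linarith)
    _ ≤ (m:ℝ) := by linarith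

/-- The inclusion homomorphism from `G` to `Xa α G x`. -/
def auxHom (α : ℝ) {V : Type*} (G : SimpleGraph V) (x : ℤ → V) : G →g Xa α G x where
  toFun := Sum.inl
  map_rel' := by
    intro a b hab
    exact ⟨fun h => hab.ne (Sum.inl_injective h), Or.inl hab⟩

def auxπ (α : ℝ) {V : Type*} (x : ℤ → V) : XaV α V → V
  | Sum.inl u => u
  | Sum.inr p => x ((p.1.1 : ℤ) ^ 2)

lemma aux_pi_rel (a b : XaV α V) (h : xaRel α G x a b) :
    G.dist (auxπ α x a) (auxπ α x b) ≤ 1 := by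
  match a, b, h with
  | Sum.inl u, Sum.inl v, h =>
    exact le_of_eq (SimpleGraph.dist_eq_one_iff_adj.mpr h)
  | Sum.inl u, Sum.inr p, h =>
    simp only [auxπ, h.2, SimpleGraph.dist_self]; omega
  | Sum.inr p, Sum.inl u, h =>
    simp only [auxπ, h.2, SimpleGraph.dist_self]; omega
  | Sum.inr p, Sum.inr q, h =>
    simp only [auxπ, h.1, SimpleGraph.dist_self]; omega

lemma aux_pi_walk (hconn : G.Connected) {a b : XaV α V} (p : (Xa α G x).Walk a b) :
    G.dist (auxπ α x a) (auxπ α x b) ≤ p.length := by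
  induction p with
  | nil => simp
  | @cons a c b h q ih =>
    obtain ⟨-, hr | hr⟩ := id h
    · calc G.dist (auxπ α x a) (auxπ α x b) ≤
          G.dist (auxπ α x a) (auxπ α x c) + G.dist (auxπ α x c) (auxπ α x b) :=
            hconn.dist_triangle
      _ ≤ 1 + q.length := Nat.add_le_add (aux_pi_rel a c hr) ih
      _ ≤ (SimpleGraph.Walk.cons h q).length := by rw [SimpleGraph.Walk.length_cons]; omega
    · calc G.dist (auxπ α x a) (auxπ α x b) ≤
          G.dist (auxπ α x a) (auxπ α x c) + G.dist (auxπ α x c) (auxπ α x b) :=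
            hconn.dist_triangle
      _ ≤ 1 + q.length := by
          refine Nat.add_le_add ?_ ih
          rw [SimpleGraph.dist_comm]
          exact aux_pi_rel c a hr
      _ ≤ (SimpleGraph.Walk.cons h q).length := by rw [SimpleGraph.Walk.length_cons]; omega

lemma aux_dist_inl (hconn : G.Connected) (u v : V) :
    (Xa α G x).dist (Sum.inl u) (Sum.inl v) = G.dist u v := by
  apply le_antisymm
  · obtain ⟨p, hp⟩ := (hconn.preconnected u v).exists_walk_length_eq_dist
    have := SimpleGraph.dist_le (p.map (auxHom α G x))
    rwa [SimpleGraph.Walk.length_map, hp] at this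
  · obtain ⟨p, hp⟩ := (hconn.preconnected u v).exists_walk_length_eq_dist
    have hreach : (Xa α G x).Reachable (Sum.inl u) (Sum.inl v) := ⟨p.map (auxHom α G x)⟩
    obtain ⟨q, hq⟩ := hreach.exists_walk_length_eq_dist
    have := aux_pi_walk hconn q
    rw [hq] at this
    exact this


lemma aux_seg : ∀ (k m : ℕ) (h : 1 ≤ m ∧ 1 ≤ k ∧ (k : ℤ) ≤ glen α m),
    ∃ p : (Xa α G x).Walk (Sum.inl (x ((m : ℤ) ^ 2))) (Sum.inr ⟨(m, k), h⟩),
      p.length = k := by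
  intro k
  induction k with
  | zero => intro m h; omega
  | succ k ih =>
    intro m h
    rcases Nat.eq_zero_or_pos k with hk | hk
    · subst hk
      have hadj : (Xa α G x).Adj (Sum.inl (x ((m : ℤ) ^ 2))) (Sum.inr ⟨(m, 1), h⟩) :=
        ⟨Sum.inl_ne_inr, Or.inl ⟨rfl, rfl⟩⟩
      exact ⟨hadj.toWalk, rfl⟩
    · have h' : 1 ≤ m ∧ 1 ≤ k ∧ (k : ℤ) ≤ glen α m := ⟨h.1, hk, by
        have := h.2.2; push_cast at this ⊢; omega⟩
      obtain ⟨p, hp⟩ := ih m h'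
      have hadj : (Xa α G x).Adj (Sum.inr ⟨(m, k), h'⟩) (Sum.inr ⟨(m, k + 1), h⟩) := by
        refine ⟨?_, Or.inl ⟨rfl, Or.inl rfl⟩⟩
        intro hcon
        have : k = k + 1 := by
          have := congrArg (Sum.elim (fun _ => 0) (fun q => q.1.2)) hcon
          simpa using this
        omega
      exact ⟨p.concat hadj, by have := SimpleGraph.Walk.length_concat p hadj; omega⟩

lemma aux_conn (hconn : G.Connected) : (Xa α G x).Connected := by
  have hbase : ∀ a : XaV α V, (Xa α G x).Reachable a (Sum.inl (x 0)) := by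
    intro a
    have hinl : ∀ u : V, (Xa α G x).Reachable (Sum.inl u) (Sum.inl (x 0)) := by
      intro u
      obtain ⟨p⟩ := hconn.preconnected u (x 0)
      exact ⟨p.map (auxHom α G x)⟩
    cases a with
    | inl u => exact hinl u
    | inr q =>
      obtain ⟨⟨m, k⟩, hq⟩ := q
      obtain ⟨p, -⟩ := aux_seg (G := G) k m hq
      exact (SimpleGraph.Walk.reachable p).symm.trans (hinl _)
  rw [SimpleGraph.connected_iff]
  exact ⟨fun a b => (hbase a).trans (hbase b).symm, ⟨Sum.inl (x 0)⟩⟩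

noncomputable def auxφ {V : Type*} (α : ℝ) (G : SimpleGraph V) (x : ℤ → V) : XaV α V → ℕ
  | Sum.inl u => G.dist (x 0) u
  | Sum.inr p => p.1.1 ^ 2 + p.1.2

lemma aux_natAbs_sq (m : ℕ) : ((0 : ℤ) - (m : ℤ) ^ 2).natAbs = m ^ 2 := by
  have : ((m : ℤ) ^ 2) = ((m ^ 2 : ℕ) : ℤ) := by push_cast; ring
  rw [zero_sub, this, Int.natAbs_neg, Int.natAbs_natCast]

lemma aux_phi_rel (hconn : G.Connected)
    (hgeo : ∀ m n : ℤ, G.dist (x m) (x n) = (m - n).natAbs)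
    (a b : XaV α V) (h : xaRel α G x a b ∨ xaRel α G x b a) :
    auxφ α G x a ≤ auxφ α G x b + 1 := by
  have key : ∀ u v : V, G.Adj u v → G.dist (x 0) u ≤ G.dist (x 0) v + 1 := by
    intro u v huv
    calc G.dist (x 0) u ≤ G.dist (x 0) v + G.dist v u := hconn.dist_triangle
    _ ≤ G.dist (x 0) v + 1 := by
        have : G.dist v u = 1 := SimpleGraph.dist_eq_one_iff_adj.mpr huv.symm
        omega
  match a, b with
  | Sum.inl u, Sum.inl v =>
    rcases h with h | h
    · exact key u v h
    · exact key u v h.symm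
  | Sum.inl u, Sum.inr p =>
    have hu : u = x ((p.1.1 : ℤ) ^ 2) := by
      rcases h with h | h
      · exact h.2
      · exact h.2
    have : auxφ α G x (Sum.inl u) = p.1.1 ^ 2 := by
      show G.dist (x 0) u = _
      rw [hu, hgeo 0 ((p.1.1 : ℤ) ^ 2), aux_natAbs_sq]
    rw [this]
    show _ ≤ p.1.1 ^ 2 + p.1.2 + 1
    omega
  | Sum.inr p, Sum.inl u =>
    have hu : u = x ((p.1.1 : ℤ) ^ 2) := by
      rcases h with h | h
      · exact h.2
      · exact h.2
    have hk : p.1.2 = 1 := by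
      rcases h with h | h
      · exact h.1
      · exact h.1
    have : auxφ α G x (Sum.inl u) = p.1.1 ^ 2 := by
      show G.dist (x 0) u = _
      rw [hu, hgeo 0 ((p.1.1 : ℤ) ^ 2), aux_natAbs_sq]
    rw [this]
    show p.1.1 ^ 2 + p.1.2 ≤ _
    omega
  | Sum.inr p, Sum.inr q =>
    show p.1.1 ^ 2 + p.1.2 ≤ q.1.1 ^ 2 + q.1.2 + 1
    rcases h with h | h
    · rcases h with ⟨h1, h2⟩
      rw [h1]; omega
    · rcases h with ⟨h1, h2⟩
      rw [← h1]; omega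

lemma aux_phi_walk (hconn : G.Connected)
    (hgeo : ∀ m n : ℤ, G.dist (x m) (x n) = (m - n).natAbs)
    {a b : XaV α V} (p : (Xa α G x).Walk a b) :
    auxφ α G x a ≤ auxφ α G x b + p.length := by
  induction p with
  | nil => simp
  | @cons a c b h q ih =>
    have h1 : auxφ α G x a ≤ auxφ α G x c + 1 := aux_phi_rel hconn hgeo a c h.2
    rw [SimpleGraph.Walk.length_cons]
    omega

lemma aux_natAbs' (j : ℕ) : ((0 : ℤ) - (j : ℤ)).natAbs = j := by omega

lemma aux_inr_mem (hconn : G.Connected)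
    (hgeo : ∀ m n : ℤ, G.dist (x m) (x n) = (m - n).natAbs)
    {n : ℕ} (q : {p : ℕ × ℕ // 1 ≤ p.1 ∧ 1 ≤ p.2 ∧ (p.2 : ℤ) ≤ glen α p.1})
    (hq : Sum.inr q ∈ gball (Xa α G x) (Sum.inl (x 0)) n) :
    q.1.1 ^ 2 + q.1.2 ≤ n := by
  have hr : (Xa α G x).Reachable (Sum.inl (x 0)) (Sum.inr q) :=
    (aux_conn hconn).preconnected _ _
  obtain ⟨p, hp⟩ := hr.exists_walk_length_eq_dist
  have hw := aux_phi_walk hconn hgeo p.reverse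
  have hrl := SimpleGraph.Walk.length_reverse p
  have h0 : auxφ α G x (Sum.inl (x 0)) = 0 := by
    show G.dist (x 0) (x 0) = 0
    exact SimpleGraph.dist_self
  have hq' : (Xa α G x).dist (Sum.inl (x 0)) (Sum.inr q) ≤ n := hq
  have hφ : auxφ α G x (Sum.inr q) = q.1.1 ^ 2 + q.1.2 := rfl
  omega

lemma aux_ball_subset (hconn : G.Connected)
    (hgeo : ∀ m n : ℤ, G.dist (x m) (x n) = (m - n).natAbs) (n : ℕ) :
    gball (Xa α G x) (Sum.inl (x 0)) n ⊆
      Sum.inl '' (gball G (x 0) n) ∪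
        Sum.inr '' {q : {p : ℕ × ℕ // 1 ≤ p.1 ∧ 1 ≤ p.2 ∧ (p.2 : ℤ) ≤ glen α p.1} |
          q.1.1 ^ 2 + q.1.2 ≤ n} := by
  intro a ha
  cases a with
  | inl u =>
    left
    refine ⟨u, ?_, rfl⟩
    have h1 : (Xa α G x).dist (Sum.inl (x 0)) (Sum.inl u) ≤ n := ha
    rw [aux_dist_inl hconn] at h1
    exact h1
  | inr q =>
    right
    exact ⟨q, aux_inr_mem hconn hgeo q ha, rfl⟩

lemma aux_inj_arith {m k m' k' : ℤ} (h1 : 1 ≤ k) (h2 : k ≤ m) (h3 : 1 ≤ k') (h4 : k' ≤ m')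
    (h : m ^ 2 + k = m' ^ 2 + k') : m = m' ∧ k = k' := by
  have hm : m = m' := by
    rcases lt_trichotomy m m' with h5 | h5 | h5
    · have h6 : (m + 1) ^ 2 ≤ m' ^ 2 := pow_le_pow_left₀ (by linarith) (by linarith) 2
      nlinarith
    · exact h5
    · have h6 : (m' + 1) ^ 2 ≤ m ^ 2 := pow_le_pow_left₀ (by linarith) (by linarith) 2
      nlinarith
  subst hm
  exact ⟨rfl, by linarith⟩

lemma aux_x_inj (hgeo : ∀ m n : ℤ, G.dist (x m) (x n) = (m - n).natAbs) :
    Function.Injective x := by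
  intro i j hij
  have h := hgeo i j
  rw [hij, SimpleGraph.dist_self] at h
  omega

lemma aux_T_maps_inj (hα : 0 < α) (hα1 : α ≤ 1)
    (hgeo : ∀ m n : ℤ, G.dist (x m) (x n) = (m - n).natAbs) (n : ℕ) :
    (∀ q ∈ {q : {p : ℕ × ℕ // 1 ≤ p.1 ∧ 1 ≤ p.2 ∧ (p.2 : ℤ) ≤ glen α p.1} |
        q.1.1 ^ 2 + q.1.2 ≤ n},
      x ((q.1.1 : ℤ) ^ 2 + q.1.2) ∈ gball G (x 0) n) ∧
    Set.InjOn (fun q : {p : ℕ × ℕ // 1 ≤ p.1 ∧ 1 ≤ p.2 ∧ (p.2 : ℤ) ≤ glen α p.1} =>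
        x ((q.1.1 : ℤ) ^ 2 + q.1.2))
      {q | q.1.1 ^ 2 + q.1.2 ≤ n} := by
  constructor
  · intro q hq
    have hmem : q.1.1 ^ 2 + q.1.2 ≤ n := hq
    show G.dist (x 0) (x ((q.1.1 : ℤ) ^ 2 + q.1.2)) ≤ n
    rw [hgeo 0 _]
    have : ((q.1.1 : ℤ) ^ 2 + q.1.2) = ((q.1.1 ^ 2 + q.1.2 : ℕ) : ℤ) := by push_cast; ring
    rw [this, aux_natAbs']
    exact hmem
  · intro q hq q' hq' heq
    have hxe : ((q.1.1 : ℤ) ^ 2 + q.1.2) = ((q'.1.1 : ℤ) ^ 2 + q'.1.2) :=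
      aux_x_inj hgeo heq
    have hb1 : (q.1.2 : ℤ) ≤ q.1.1 := q.2.2.2.trans (aux_glen_le hα hα1 _ q.2.1)
    have hb2 : (q'.1.2 : ℤ) ≤ q'.1.1 := q'.2.2.2.trans (aux_glen_le hα hα1 _ q'.2.1)
    have h1 : (1 : ℤ) ≤ q.1.2 := by exact_mod_cast q.2.2.1
    have h2 : (1 : ℤ) ≤ q'.1.2 := by exact_mod_cast q'.2.2.1
    obtain ⟨hm, hk⟩ := aux_inj_arith h1 hb1 h2 hb2 hxe
    have hm' : q.1.1 = q'.1.1 := by exact_mod_cast hm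
    have hk' : q.1.2 = q'.1.2 := by exact_mod_cast hk
    exact Subtype.ext (Prod.ext hm' hk')

lemma aux_main (hlf : ∀ v : V, (G.neighborSet v).Finite) (hconn : G.Connected)
    (hgeo : ∀ m n : ℤ, G.dist (x m) (x n) = (m - n).natAbs)
    (hα : 0 < α) (hα1 : α ≤ 1) (n : ℕ) :
    (gball G (x 0) n).ncard ≤ (gball (Xa α G x) (Sum.inl (x 0)) n).ncard ∧
    (gball (Xa α G x) (Sum.inl (x 0)) n).ncard ≤ 2 * (gball G (x 0) n).ncard := by
  set T : Set {p : ℕ × ℕ // 1 ≤ p.1 ∧ 1 ≤ p.2 ∧ (p.2 : ℤ) ≤ glen α p.1} :=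
    {q | q.1.1 ^ 2 + q.1.2 ≤ n} with hT
  obtain ⟨hmaps, hinj⟩ := aux_T_maps_inj (G := G) (x := x) hα hα1 hgeo n
  have hGfin : (gball G (x 0) n).Finite := aux_ball_finite G hlf hconn (x 0) n
  have hTfin : T.Finite := by
    apply Set.Finite.of_finite_image (f := fun q => x ((q.1.1 : ℤ) ^ 2 + q.1.2))
    · apply hGfin.subset
      rintro - ⟨q, hq, rfl⟩
      exact hmaps q hq
    · exact hinj
  have hUfin : (Sum.inl '' (gball G (x 0) n) ∪ Sum.inr '' T).Finite :=
    (hGfin.image _).union (hTfin.image _)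
  have hHfin : (gball (Xa α G x) (Sum.inl (x 0)) n).Finite :=
    hUfin.subset (aux_ball_subset hconn hgeo n)
  constructor
  · refine Set.ncard_le_ncard_of_injOn Sum.inl ?_ (fun a _ b _ h => Sum.inl_injective h) hHfin
    intro u hu
    have h1 : G.dist (x 0) u ≤ n := hu
    show (Xa α G x).dist (Sum.inl (x 0)) (Sum.inl u) ≤ n
    rw [aux_dist_inl hconn]
    exact h1
  · calc (gball (Xa α G x) (Sum.inl (x 0)) n).ncard
        ≤ (Sum.inl '' (gball G (x 0) n) ∪ Sum.inr '' T).ncard :=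
          Set.ncard_le_ncard (aux_ball_subset hconn hgeo n) hUfin
    _ ≤ (Sum.inl '' (gball G (x 0) n)).ncard + (Sum.inr '' T).ncard :=
          Set.ncard_union_le _ _
    _ = (gball G (x 0) n).ncard + T.ncard := by
          rw [Set.ncard_image_of_injective _ Sum.inl_injective,
            Set.ncard_image_of_injective _ Sum.inr_injective]
    _ ≤ (gball G (x 0) n).ncard + (gball G (x 0) n).ncard := by
          have h9 := Set.ncard_le_ncard_of_injOn _ hmaps hinj hGfin
          rw [← hT] at h9
          omega
    _ = 2 * (gball G (x 0) n).ncard := by ring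

lemma aux_Hball_fin (hlf : ∀ v : V, (G.neighborSet v).Finite) (hconn : G.Connected)
    (hgeo : ∀ m n : ℤ, G.dist (x m) (x n) = (m - n).natAbs)
    (hα : 0 < α) (hα1 : α ≤ 1) (n : ℕ) :
    (gball (Xa α G x) (Sum.inl (x 0)) n).Finite := by
  obtain ⟨hmaps, hinj⟩ := aux_T_maps_inj (G := G) (x := x) hα hα1 hgeo n
  have hGfin : (gball G (x 0) n).Finite := aux_ball_finite G hlf hconn (x 0) n
  have hTfin : Set.Finite {q : {p : ℕ × ℕ // 1 ≤ p.1 ∧ 1 ≤ p.2 ∧ (p.2 : ℤ) ≤ glen α p.1} |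
      q.1.1 ^ 2 + q.1.2 ≤ n} := by
    apply Set.Finite.of_finite_image (f := fun q => x ((q.1.1 : ℤ) ^ 2 + q.1.2))
    · apply hGfin.subset
      rintro - ⟨q, hq, rfl⟩
      exact hmaps q hq
    · exact hinj
  exact ((hGfin.image _).union (hTfin.image _)).subset (aux_ball_subset hconn hgeo n)

end Aux

/-- for every `n ≥ 1`,
`|B_X(x₀,n)| ≤ |B_{X_α}(x₀,n)| ≤ 2|B_X(x₀,n)|` where `x₀ = x 0`; in particular `X` and
`X_α` have equivalent growth functions. -/
theorem stmt9 {V : Type*} (G : SimpleGraph V) [Infinite V]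
    (hlf : ∀ v : V, (G.neighborSet v).Finite) (hconn : G.Connected)
    (x : ℤ → V) (hgeo : ∀ m n : ℤ, G.dist (x m) (x n) = (m - n).natAbs)
    (α : ℝ) (hα : 0 < α) (hα1 : α ≤ 1) :
    (∀ n : ℕ, 1 ≤ n →
      (gball G (x 0) n).ncard ≤ (gball (Xa α G x) (Sum.inl (x 0)) n).ncard ∧
      (gball (Xa α G x) (Sum.inl (x 0)) n).ncard ≤ 2 * (gball G (x 0) n).ncard) ∧
    (∃ c : ℕ, 0 < c ∧ ∀ n : ℕ,
      (gball G (x 0) n).ncard ≤ c * (gball (Xa α G x) (Sum.inl (x 0)) (c * n + c)).ncard ∧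
      (gball (Xa α G x) (Sum.inl (x 0)) n).ncard ≤ c * (gball G (x 0) (c * n + c)).ncard) := by
  have hmain : ∀ n : ℕ,
      (gball G (x 0) n).ncard ≤ (gball (Xa α G x) (Sum.inl (x 0)) n).ncard ∧
      (gball (Xa α G x) (Sum.inl (x 0)) n).ncard ≤ 2 * (gball G (x 0) n).ncard :=
    fun n => aux_main hlf hconn hgeo hα hα1 n
  refine ⟨fun n _ => hmain n, 2, by norm_num, fun n => ?_⟩
  have hGmono : (gball G (x 0) n).ncard ≤ (gball G (x 0) (2 * n + 2)).ncard := by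
    refine Set.ncard_le_ncard ?_ (aux_ball_finite G hlf hconn (x 0) _)
    intro v hv
    have h1 : G.dist (x 0) v ≤ n := hv
    show G.dist (x 0) v ≤ 2 * n + 2
    omega
  have hHmono : (gball (Xa α G x) (Sum.inl (x 0)) n).ncard ≤
      (gball (Xa α G x) (Sum.inl (x 0)) (2 * n + 2)).ncard := by
    refine Set.ncard_le_ncard ?_ (aux_Hball_fin hlf hconn hgeo hα hα1 _)
    intro v hv
    have h1 : (Xa α G x).dist (Sum.inl (x 0)) v ≤ n := hv
    show (Xa α G x).dist (Sum.inl (x 0)) v ≤ 2 * n + 2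
    omega
  constructor
  · have := (hmain n).1
    have := (hmain (2 * n + 2)).1
    omega
  · have := (hmain n).2
    omega
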